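/- Let a > 0, s ∈ (0,1), b > 0 and t > s, and let {u_k} be a sequence of nonnegative reals satisfying u_{k+1} ≤ (1 − a·k^{−s})·u_k + b·k^{−t} for each k ∈ ℕ. Then u_{k+1} ≤ (b/a)·k^{s−t} + o(k^{s−t}), i.e., limsup_k u_{k+1}·k^{t−s} ≤ b/a. -/

import Mathlib

open Filter Real Topology

theorem stmt5 (a s b t : ℝ) (ha : 0 < a) (hs : s ∈ Set.Ioo (0 : ℝ) 1) (hb : 0 < b)
    (hts : s < t) (u : ℕ → ℝ) (hu : ∀ k, 0 ≤ u k)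
    (hrec : ∀ k : ℕ, 1 ≤ k →
      u (k + 1) ≤ (1 - a * (k : ℝ) ^ (-s)) * u k + b * (k : ℝ) ^ (-t)) :
    Filter.limsup (fun k : ℕ => u (k + 1) * (k : ℝ) ^ (t - s)) Filter.atTop ≤ b / a := by
  obtain ⟨hs0, hs1⟩ := hs
  refine le_of_forall_gt_imp_ge_of_dense fun c hc => ?_
  have hc0 : 0 < c := lt_trans (div_pos hb ha) hc
  have hbac : b < a * c := by
    rw [div_lt_iff₀ ha] at hc; linarith
  have hacb : 0 < a * c - b := by linarith
  have hδ : 0 < a - b / c := by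
    have h1 : b / c < a := (div_lt_iff₀ hc0).mpr (by linarith)
    linarith
  set δ := a - b / c with hδdef
  -- E1 : eventually a * k^(-s) ≤ 1
  have hrs : Tendsto (fun k : ℕ => a * (k : ℝ) ^ (-s)) atTop (𝓝 0) := by
    have := ((tendsto_rpow_neg_atTop hs0).comp tendsto_natCast_atTop_atTop).const_mul a
    simpa using this
  have hE1 : ∀ᶠ k : ℕ in atTop, a * (k : ℝ) ^ (-s) ≤ 1 :=
    (hrs.eventually_lt_const one_pos).mono fun k hk => hk.le
  -- slope limit
  have hderiv : HasDerivAt (fun x : ℝ => x ^ (s - t)) ((s - t) * (1 : ℝ) ^ (s - t - 1)) 1 :=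
    Real.hasDerivAt_rpow_const (Or.inl one_ne_zero)
  rw [Real.one_rpow, mul_one] at hderiv
  have hslope : Tendsto (slope (fun x : ℝ => x ^ (s - t)) 1) (𝓝[≠] 1) (𝓝 (s - t)) :=
    hasDerivAt_iff_tendsto_slope.mp hderiv
  have hy : Tendsto (fun k : ℕ => 1 + 1 / (k : ℝ)) atTop (𝓝[≠] 1) := by
    rw [tendsto_nhdsWithin_iff]
    constructor
    · have := (tendsto_one_div_atTop_nhds_zero_nat : Tendsto (fun n : ℕ => 1 / (n : ℝ)) atTop (𝓝 0)).const_add 1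
      simpa using this
    · filter_upwards [eventually_ge_atTop 1] with k hk
      have hk0 : (0 : ℝ) < (k : ℝ) := by exact_mod_cast hk
      have : (0 : ℝ) < 1 / (k : ℝ) := by positivity
      simp only [Set.mem_compl_iff, Set.mem_singleton_iff]
      intro h
      nlinarith [h]
  have hg : Tendsto (fun k : ℕ => ((1 + 1 / (k : ℝ)) ^ (s - t) - 1) * k) atTop (𝓝 (s - t)) := by
    have hcomp := hslope.comp hy
    apply hcomp.congr'
    filter_upwards [eventually_ge_atTop 1] with k hk
    have hk0 : (0 : ℝ) < (k : ℝ) := by exact_mod_cast hk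
    simp only [Function.comp_apply, slope_def_field]
    have hne : (1 + 1 / (k:ℝ)) - 1 ≠ 0 := by
      have h1 : (0:ℝ) < 1 / (k:ℝ) := by positivity
      intro h; nlinarith [h]
    rw [div_eq_iff hne]
    rw [Real.one_rpow]
    field_simp
    ring
  have hg' : Tendsto (fun k : ℕ => c * ((1 - (1 + 1 / (k : ℝ)) ^ (s - t)) * k)) atTop
      (𝓝 (c * (t - s))) := by
    have h2 := (hg.neg).const_mul c
    rw [show c * -(s - t) = c * (t - s) by ring] at h2
    exact h2.congr fun k => by ring
  -- RHS tendsto atTop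
  have hR : Tendsto (fun k : ℕ => (a * c - b) * (k : ℝ) ^ (1 - s)) atTop atTop := by
    have h1 : Tendsto (fun k : ℕ => (k : ℝ) ^ (1 - s)) atTop atTop :=
      (tendsto_rpow_atTop (by linarith)).comp tendsto_natCast_atTop_atTop
    exact h1.const_mul_atTop hacb
  have hE2' : ∀ᶠ k : ℕ in atTop,
      c * ((1 - (1 + 1 / (k : ℝ)) ^ (s - t)) * k) < (a * c - b) * (k : ℝ) ^ (1 - s) := by
    filter_upwards [hg'.eventually_lt_const (lt_add_one (c * (t - s))),
      hR.eventually_gt_atTop (c * (t - s) + 1)] with k h1 h2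
    linarith
  have hE2 : ∀ᶠ k : ℕ in atTop,
      c * (k : ℝ) ^ (s - t) - c * ((k : ℝ) + 1) ^ (s - t) ≤ (a * c - b) * (k : ℝ) ^ (-t) := by
    filter_upwards [hE2', eventually_ge_atTop 1] with k h hk1
    have hk0 : (0 : ℝ) < (k : ℝ) := by exact_mod_cast hk1
    have hA0 : (0 : ℝ) ≤ 1 + 1 / (k : ℝ) := by positivity
    have e0 : (k : ℝ) * (1 + 1 / (k : ℝ)) = (k : ℝ) + 1 := by field_simp
    have e1 : (k : ℝ) ^ (s - t) * (1 + 1 / (k : ℝ)) ^ (s - t) = ((k : ℝ) + 1) ^ (s - t) := by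
      rw [← Real.mul_rpow hk0.le hA0, e0]
    have e2 : (k : ℝ) ^ (s - t - 1) * (k : ℝ) = (k : ℝ) ^ (s - t) := by
      rw [← Real.rpow_add_one hk0.ne']
      congr 1; ring
    have e3 : (a * c - b) * (k : ℝ) ^ (1 - s) * (k : ℝ) ^ (s - t - 1)
        = (a * c - b) * (k : ℝ) ^ (-t) := by
      rw [mul_assoc, ← Real.rpow_add hk0]
      congr 2; ring
    have hmul := mul_le_mul_of_nonneg_right h.le (Real.rpow_nonneg hk0.le (s - t - 1))
    have key : c * (k : ℝ) ^ (s - t) - c * ((k : ℝ) + 1) ^ (s - t)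
        = c * ((1 - (1 + 1 / (k : ℝ)) ^ (s - t)) * (k : ℝ)) * (k : ℝ) ^ (s - t - 1) := by
      rw [← e1, ← e2]; ring
    linarith [hmul, key, e3]
  obtain ⟨K, hK⟩ := eventually_atTop.mp ((hE1.and hE2).and (eventually_ge_atTop 1))
  -- Step B: the sequence eventually dips below c * k^(s-t)
  have hcross : ∃ k0, K ≤ k0 ∧ u k0 ≤ c * ((k0 : ℕ) : ℝ) ^ (s - t) := by
    by_contra hcon
    push_neg at hcon
    -- one-step decay
    have hstep : ∀ n : ℕ, u (K + n + 1)
        ≤ Real.exp (-(δ * ((K + n : ℕ) : ℝ) ^ (-s))) * u (K + n) := by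
      intro n
      have hmK : K ≤ K + n := Nat.le_add_right K n
      obtain ⟨⟨hE1m, hE2m⟩, hm1⟩ := hK (K + n) hmK
      have hm0 : (0 : ℝ) < ((K + n : ℕ) : ℝ) := by exact_mod_cast hm1
      have hums : c * ((K + n : ℕ) : ℝ) ^ (s - t) < u (K + n) := hcon (K + n) hmK
      have e : ((K + n : ℕ) : ℝ) ^ (-s) * ((K + n : ℕ) : ℝ) ^ (s - t)
          = ((K + n : ℕ) : ℝ) ^ (-t) := by
        rw [← Real.rpow_add hm0]; congr 1; ring
      have h1 : b / c * ((K + n : ℕ) : ℝ) ^ (-s) * (c * ((K + n : ℕ) : ℝ) ^ (s - t))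
          = b * ((K + n : ℕ) : ℝ) ^ (-t) := by
        rw [← e]; field_simp
      have hnn : 0 ≤ b / c * ((K + n : ℕ) : ℝ) ^ (-s) := by positivity
      have hb2 : b * ((K + n : ℕ) : ℝ) ^ (-t)
          ≤ b / c * ((K + n : ℕ) : ℝ) ^ (-s) * u (K + n) := by
        calc b * ((K + n : ℕ) : ℝ) ^ (-t)
            = b / c * ((K + n : ℕ) : ℝ) ^ (-s) * (c * ((K + n : ℕ) : ℝ) ^ (s - t)) := h1.symm
          _ ≤ b / c * ((K + n : ℕ) : ℝ) ^ (-s) * u (K + n) :=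
              mul_le_mul_of_nonneg_left hums.le hnn
      have hrecm := hrec (K + n) hm1
      have hfac : u (K + n + 1) ≤ (1 - δ * ((K + n : ℕ) : ℝ) ^ (-s)) * u (K + n) := by
        have hexpand : (1 - a * ((K + n : ℕ) : ℝ) ^ (-s)) * u (K + n)
            + b / c * ((K + n : ℕ) : ℝ) ^ (-s) * u (K + n)
            = (1 - δ * ((K + n : ℕ) : ℝ) ^ (-s)) * u (K + n) := by
          rw [hδdef]; ring
        calc u (K + n + 1) ≤ (1 - a * ((K + n : ℕ) : ℝ) ^ (-s)) * u (K + n)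
              + b * ((K + n : ℕ) : ℝ) ^ (-t) := hrecm
          _ ≤ (1 - a * ((K + n : ℕ) : ℝ) ^ (-s)) * u (K + n)
              + b / c * ((K + n : ℕ) : ℝ) ^ (-s) * u (K + n) := by linarith [hb2]
          _ = (1 - δ * ((K + n : ℕ) : ℝ) ^ (-s)) * u (K + n) := hexpand
      have hexp : 1 - δ * ((K + n : ℕ) : ℝ) ^ (-s)
          ≤ Real.exp (-(δ * ((K + n : ℕ) : ℝ) ^ (-s))) := by
        linarith [Real.add_one_le_exp (-(δ * ((K + n : ℕ) : ℝ) ^ (-s)))]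
      exact hfac.trans (mul_le_mul_of_nonneg_right hexp (hu (K + n)))
    -- cumulative decay
    have hind : ∀ n : ℕ, u (K + n)
        ≤ u K * Real.exp (-(δ * (n : ℝ) * ((K + n : ℕ) : ℝ) ^ (-s))) := by
      intro n
      induction n with
      | zero => simp
      | succ n ih =>
        have hmK : K ≤ K + n := Nat.le_add_right K n
        obtain ⟨⟨hE1m, hE2m⟩, hm1⟩ := hK (K + n) hmK
        have hm0 : (0 : ℝ) < ((K + n : ℕ) : ℝ) := by exact_mod_cast hm1
        have hcast : ((K + (n + 1) : ℕ) : ℝ) = ((K + n : ℕ) : ℝ) + 1 := by push_cast; ring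
        have hmono : ((K + (n + 1) : ℕ) : ℝ) ^ (-s) ≤ ((K + n : ℕ) : ℝ) ^ (-s) := by
          rw [hcast]
          exact Real.rpow_le_rpow_of_nonpos hm0 (by linarith) (by linarith)
        have h2 : u (K + (n + 1)) ≤ Real.exp (-(δ * ((K + n : ℕ) : ℝ) ^ (-s)))
            * (u K * Real.exp (-(δ * (n : ℝ) * ((K + n : ℕ) : ℝ) ^ (-s)))) := by
          refine (hstep n).trans ?_
          exact mul_le_mul_of_nonneg_left ih (Real.exp_nonneg _)
        have h3 : Real.exp (-(δ * ((K + n : ℕ) : ℝ) ^ (-s)))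
            * (u K * Real.exp (-(δ * (n : ℝ) * ((K + n : ℕ) : ℝ) ^ (-s))))
            = u K * Real.exp (-(δ * ((n : ℝ) + 1) * ((K + n : ℕ) : ℝ) ^ (-s))) := by
          rw [mul_comm, mul_assoc, ← Real.exp_add]
          congr 2; ring
        have h4 : Real.exp (-(δ * ((n : ℝ) + 1) * ((K + n : ℕ) : ℝ) ^ (-s)))
            ≤ Real.exp (-(δ * (((n : ℕ) : ℝ) + 1) * ((K + (n + 1) : ℕ) : ℝ) ^ (-s))) := by
          rw [Real.exp_le_exp]
          have hδn : 0 ≤ δ * ((n : ℝ) + 1) := by positivity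
          nlinarith [hmono, hδn]
        calc u (K + (n + 1)) ≤ _ := h2
          _ = _ := h3
          _ ≤ u K * Real.exp (-(δ * (((n : ℕ) : ℝ) + 1) * ((K + (n + 1) : ℕ) : ℝ) ^ (-s))) :=
              mul_le_mul_of_nonneg_left h4 (hu K)
          _ = u K * Real.exp (-(δ * (((n + 1 : ℕ) : ℝ)) * ((K + (n + 1) : ℕ) : ℝ) ^ (-s))) := by
              push_cast; ring_nf
    -- contradiction via exponential decay
    have hUK : 0 < u K := by
      have h0 : (0:ℝ) ≤ c * ((K:ℕ):ℝ) ^ (s - t) :=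
        mul_nonneg hc0.le (Real.rpow_nonneg (Nat.cast_nonneg K) _)
      exact lt_of_le_of_lt h0 (hcon K le_rfl)
    have h1s : (0:ℝ) < 1 - s := by linarith
    have hT0 : Tendsto (fun y : ℝ => y ^ ((t - s) / (1 - s)) * Real.exp (-(δ / 2) * y))
        atTop (𝓝 0) :=
      tendsto_rpow_mul_exp_neg_mul_atTop_nhds_zero ((t - s) / (1 - s)) (δ / 2) (by positivity)
    have hcomp : Tendsto (fun m : ℕ => ((m : ℝ) ^ (1 - s))) atTop atTop :=
      (tendsto_rpow_atTop h1s).comp tendsto_natCast_atTop_atTop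
    have hT : Tendsto (fun m : ℕ => (m : ℝ) ^ (t - s)
        * Real.exp (-(δ / 2 * (m : ℝ) ^ (1 - s)))) atTop (𝓝 0) := by
      apply (hT0.comp hcomp).congr'
      filter_upwards [eventually_ge_atTop 1] with m hm
      have hm0 : (0 : ℝ) ≤ (m : ℝ) := Nat.cast_nonneg m
      simp only [Function.comp_apply]
      rw [← Real.rpow_mul hm0, show (1 - s) * ((t - s) / (1 - s)) = t - s from by
        field_simp, neg_mul]
    have hE3 : ∀ᶠ m : ℕ in atTop,
        u K * ((m : ℝ) ^ (t - s) * Real.exp (-(δ / 2 * (m : ℝ) ^ (1 - s)))) < c := by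
      have h5 := hT.const_mul (u K)
      rw [mul_zero] at h5
      exact h5.eventually_lt_const hc0
    obtain ⟨N, hN⟩ := eventually_atTop.mp hE3
    set n := max K N with hn
    set m := K + n with hm
    have hKm : K ≤ m := Nat.le_add_right K n
    obtain ⟨⟨hE1m, hE2m⟩, hm1⟩ := hK m hKm
    have hm0 : (0 : ℝ) < (m : ℝ) := by exact_mod_cast hm1
    have hNm := hN m (le_trans (le_max_right K N) (Nat.le_add_left n K))
    have hhalf : (m : ℝ) / 2 ≤ (n : ℝ) := by
      have : m ≤ 2 * n := by omega
      have h6 : (m : ℝ) ≤ 2 * (n : ℝ) := by exact_mod_cast this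
      linarith
    have e0 : (m : ℝ) * (m : ℝ) ^ (-s) = (m : ℝ) ^ (1 - s) := by
      rw [show (1 : ℝ) - s = -s + 1 by ring, Real.rpow_add_one hm0.ne']
      ring
    have hexpbd : Real.exp (-(δ * (n : ℝ) * (m : ℝ) ^ (-s)))
        ≤ Real.exp (-(δ / 2 * (m : ℝ) ^ (1 - s))) := by
      rw [Real.exp_le_exp, neg_le_neg_iff]
      have hXp : (0 : ℝ) < (m : ℝ) ^ (-s) := Real.rpow_pos_of_pos hm0 _
      calc δ / 2 * (m : ℝ) ^ (1 - s) = δ / 2 * ((m : ℝ) * (m : ℝ) ^ (-s)) := by rw [e0]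
        _ = (m : ℝ) / 2 * (δ * (m : ℝ) ^ (-s)) := by ring
        _ ≤ (n : ℝ) * (δ * (m : ℝ) ^ (-s)) :=
            mul_le_mul_of_nonneg_right hhalf (mul_nonneg hδ.le hXp.le)
        _ = δ * (n : ℝ) * (m : ℝ) ^ (-s) := by ring
    have hmm : c * (m : ℝ) ^ (s - t) < u K * Real.exp (-(δ / 2 * (m : ℝ) ^ (1 - s))) := by
      refine lt_of_lt_of_le (hcon m hKm) ((hind n).trans ?_)
      exact mul_le_mul_of_nonneg_left hexpbd (hu K)
    have hX : (0 : ℝ) < (m : ℝ) ^ (s - t) := Real.rpow_pos_of_pos hm0 _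
    have h2 := mul_lt_mul_of_pos_right hNm hX
    have e1 : (m : ℝ) ^ (t - s) * (m : ℝ) ^ (s - t) = 1 := by
      rw [← Real.rpow_add hm0, show t - s + (s - t) = 0 by ring, Real.rpow_zero]
    have h3 : u K * ((m : ℝ) ^ (t - s) * Real.exp (-(δ / 2 * (m : ℝ) ^ (1 - s))))
        * (m : ℝ) ^ (s - t) = u K * Real.exp (-(δ / 2 * (m : ℝ) ^ (1 - s))) := by
      calc u K * ((m : ℝ) ^ (t - s) * Real.exp (-(δ / 2 * (m : ℝ) ^ (1 - s))))
            * (m : ℝ) ^ (s - t)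
          = u K * Real.exp (-(δ / 2 * (m : ℝ) ^ (1 - s)))
            * ((m : ℝ) ^ (t - s) * (m : ℝ) ^ (s - t)) := by ring
        _ = u K * Real.exp (-(δ / 2 * (m : ℝ) ^ (1 - s))) := by rw [e1, mul_one]
    linarith [hmm, h2, h3]
  obtain ⟨k0, hk0K, hk00⟩ := hcross
  -- Step C: once below, stays below
  have hCind : ∀ n : ℕ, u (k0 + n) ≤ c * ((k0 + n : ℕ) : ℝ) ^ (s - t) := by
    intro n
    induction n with
    | zero => simpa using hk00
    | succ n ih =>
      have hmK : K ≤ k0 + n := le_trans hk0K (Nat.le_add_right _ _)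
      obtain ⟨⟨hE1m, hE2m⟩, hm1⟩ := hK (k0 + n) hmK
      have hm0 : (0 : ℝ) < ((k0 + n : ℕ) : ℝ) := by exact_mod_cast hm1
      have hrecm := hrec (k0 + n) hm1
      have hfac : (1 - a * ((k0 + n : ℕ) : ℝ) ^ (-s)) * u (k0 + n)
          ≤ (1 - a * ((k0 + n : ℕ) : ℝ) ^ (-s)) * (c * ((k0 + n : ℕ) : ℝ) ^ (s - t)) :=
        mul_le_mul_of_nonneg_left ih (by linarith [hE1m])
      have e : ((k0 + n : ℕ) : ℝ) ^ (-s) * ((k0 + n : ℕ) : ℝ) ^ (s - t)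
          = ((k0 + n : ℕ) : ℝ) ^ (-t) := by
        rw [← Real.rpow_add hm0]; congr 1; ring
      have hexp2 : (1 - a * ((k0 + n : ℕ) : ℝ) ^ (-s)) * (c * ((k0 + n : ℕ) : ℝ) ^ (s - t))
          = c * ((k0 + n : ℕ) : ℝ) ^ (s - t) - a * c * ((k0 + n : ℕ) : ℝ) ^ (-t) := by
        rw [← e]; ring
      have hcast : ((k0 + (n + 1) : ℕ) : ℝ) = ((k0 + n : ℕ) : ℝ) + 1 := by push_cast; ring
      have hgoal : u (k0 + n + 1) ≤ c * (((k0 + n : ℕ) : ℝ) + 1) ^ (s - t) := by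
        linarith [hrecm, hfac, hexp2, hE2m]
      rw [show k0 + (n + 1) = k0 + n + 1 from rfl, hcast] at *
      exact hgoal
  -- eventual bound for the limsup
  have hev : ∀ᶠ k : ℕ in atTop, u (k + 1) * (k : ℝ) ^ (t - s) ≤ c := by
    filter_upwards [eventually_ge_atTop k0] with k hkk0
    obtain ⟨n, rfl⟩ : ∃ n, k = k0 + n := ⟨k - k0, (Nat.add_sub_cancel' hkk0).symm⟩
    have hmK : K ≤ k0 + n := le_trans hk0K (Nat.le_add_right _ _)
    obtain ⟨_, hm1⟩ := hK (k0 + n) hmK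
    have hm0 : (0 : ℝ) < ((k0 + n : ℕ) : ℝ) := by exact_mod_cast hm1
    have h1 := hCind (n + 1)
    have hcast : ((k0 + (n + 1) : ℕ) : ℝ) = ((k0 + n : ℕ) : ℝ) + 1 := by push_cast; ring
    rw [hcast] at h1
    have hmono : (((k0 + n : ℕ) : ℝ) + 1) ^ (s - t) ≤ ((k0 + n : ℕ) : ℝ) ^ (s - t) :=
      Real.rpow_le_rpow_of_nonpos hm0 (by linarith) (by linarith)
    have h2 : u (k0 + n + 1) ≤ c * ((k0 + n : ℕ) : ℝ) ^ (s - t) :=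
      h1.trans (mul_le_mul_of_nonneg_left hmono hc0.le)
    have e1 : ((k0 + n : ℕ) : ℝ) ^ (s - t) * ((k0 + n : ℕ) : ℝ) ^ (t - s) = 1 := by
      rw [← Real.rpow_add hm0, show s - t + (t - s) = 0 by ring, Real.rpow_zero]
    calc u (k0 + n + 1) * ((k0 + n : ℕ) : ℝ) ^ (t - s)
        ≤ c * ((k0 + n : ℕ) : ℝ) ^ (s - t) * ((k0 + n : ℕ) : ℝ) ^ (t - s) :=
          mul_le_mul_of_nonneg_right h2 (Real.rpow_nonneg hm0.le _)
      _ = c * (((k0 + n : ℕ) : ℝ) ^ (s - t) * ((k0 + n : ℕ) : ℝ) ^ (t - s)) := by ring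
      _ = c := by rw [e1, mul_one]
  refine Filter.limsup_le_of_le ?_ hev
  exact Filter.isCoboundedUnder_le_of_le (x := 0) atTop fun k =>
    mul_nonneg (hu (k + 1)) (Real.rpow_nonneg (Nat.cast_nonneg k) _)
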